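/- Fix q ∈ ℝ^d with q ≠ 0, η > 0, x ∈ ℝ^d, and y ∈ ℝ, and write p = ⟨q, x⟩. Consider the squared loss ℓ(w) = (1/2)(⟨q,w⟩ − y)² with conjugate ℓ*(z) = sup_w (⟨z,w⟩ − ℓ(w)), and define H(z) = (η/2)‖x/η − z‖² + ℓ*(z). Let g = (p − y) q and let z = ((p − y)(1 − e^{−η ‖q‖²}) / (η ‖q‖²)) q be the IWA dual vector. Then H(z) ≤ H(g). -/

import Mathlib

open scoped RealInnerProductSpace

lemma iwa_aux_real (u a : ℝ) (hu : 0 < u) :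
    (a * ((1 - Real.exp (-u)) / u)) ^ 2 * (u + 1)
      - 2 * a * (a * ((1 - Real.exp (-u)) / u))
      ≤ a ^ 2 * (u + 1) - 2 * a ^ 2 := by
  set e := Real.exp (-u) with hedef
  set s := (1 - e) / u with hs
  have hmul : e * Real.exp u = 1 := by
    rw [hedef, ← Real.exp_add]; simp
  have he1 : e * (1 + u) ≤ 1 := by
    nlinarith [Real.add_one_le_exp u, Real.exp_pos (-u)]
  have he : e = 1 - s * u := by
    rw [hs, div_mul_cancel₀ _ hu.ne']; ring
  have h1 : s ≤ 1 := by
    have hle : 1 - e ≤ u := by nlinarith [Real.add_one_le_exp (-u)]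
    rw [hs, div_le_one hu]; exact hle
  have h2 : 0 ≤ u + s + s * u - 1 := by nlinarith
  have cert : 0 ≤ a ^ 2 * (1 - s) * (u + s + s * u - 1) :=
    mul_nonneg (mul_nonneg (sq_nonneg a) (by linarith)) h2
  nlinarith [cert]

/-- The IWA dual vector for the squared loss `ℓ(w) = (1/2)(⟨q,w⟩ - y)²`
satisfies `H(z) ≤ H(g)`, where `g = (p - y) q` is the gradient at `x`,
`z = ((p - y)(1 - e^{-η‖q‖²})/(η‖q‖²)) q` the IWA dual vector, and
`H(z) = (η/2)‖x/η - z‖² + ℓ*(z)`. -/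
theorem iwa_squared_loss_H_le
    (d : ℕ) (q : EuclideanSpace ℝ (Fin d)) (hq : q ≠ 0) (η : ℝ) (hη : 0 < η)
    (x : EuclideanSpace ℝ (Fin d)) (y : ℝ) (p : ℝ) (hp : p = ⟪q, x⟫)
    (lstar : EuclideanSpace ℝ (Fin d) → EReal)
    (hlstar : ∀ zz, lstar zz = ⨆ w, ((⟪zz, w⟫ - 1 / 2 * (⟪q, w⟫ - y) ^ 2 : ℝ) : EReal))
    (H : EuclideanSpace ℝ (Fin d) → EReal)
    (hH : ∀ zz, H zz = ((η / 2 * ‖η⁻¹ • x - zz‖ ^ 2 : ℝ) : EReal) + lstar zz)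
    (g z : EuclideanSpace ℝ (Fin d))
    (hg : g = (p - y) • q)
    (hz : z = ((p - y) * (1 - Real.exp (-(η * ‖q‖ ^ 2))) / (η * ‖q‖ ^ 2)) • q) :
    H z ≤ H g := by
  have hQ : (0 : ℝ) < ‖q‖ ^ 2 := pow_pos (norm_pos_iff.mpr hq) 2
  have hQ' : ‖q‖ ≠ 0 := norm_ne_zero_iff.mpr hq
  -- compute the conjugate at scalar multiples of q
  have key : ∀ c : ℝ,
      (⨆ w : EuclideanSpace ℝ (Fin d),
        ((⟪c • q, w⟫ - 1 / 2 * (⟪q, w⟫ - y) ^ 2 : ℝ) : EReal))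
        = ((c * y + c ^ 2 / 2 : ℝ) : EReal) := by
    intro c
    apply le_antisymm
    · apply iSup_le
      intro w
      rw [EReal.coe_le_coe_iff]
      have hsm : ⟪c • q, w⟫ = c * ⟪q, w⟫ := real_inner_smul_left q w c
      rw [hsm]
      nlinarith [sq_nonneg (⟪q, w⟫ - (y + c))]
    · have hw : ⟪q, (((y + c) / ‖q‖ ^ 2) • q : EuclideanSpace ℝ (Fin d))⟫ = y + c := by
        rw [real_inner_smul_right, real_inner_self_eq_norm_sq]
        field_simp
      refine le_trans ?_ (le_iSup _ (((y + c) / ‖q‖ ^ 2) • q))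
      rw [EReal.coe_le_coe_iff]
      have hsm : ⟪c • q, (((y + c) / ‖q‖ ^ 2) • q : EuclideanSpace ℝ (Fin d))⟫
          = c * (y + c) := by
        rw [real_inner_smul_left, hw]
      rw [hsm, hw]; exact le_of_eq (by ring)
  -- H at scalar multiples of q
  have Hc : ∀ c : ℝ, H (c • q)
      = ((η / 2 * ‖η⁻¹ • x - c • q‖ ^ 2 + (c * y + c ^ 2 / 2) : ℝ) : EReal) := by
    intro c
    rw [hH, hlstar, key c, ← EReal.coe_add]
  have hnorm : ∀ c : ℝ, ‖η⁻¹ • x - c • q‖ ^ 2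
      = ‖η⁻¹ • x‖ ^ 2 - 2 * (c * (η⁻¹ * p)) + c ^ 2 * ‖q‖ ^ 2 := by
    intro c
    rw [norm_sub_sq_real]
    have hin : ⟪η⁻¹ • x, c • q⟫ = c * (η⁻¹ * p) := by
      rw [real_inner_smul_left, real_inner_smul_right, real_inner_comm, ← hp]; ring
    have hns : ‖c • q‖ ^ 2 = c ^ 2 * ‖q‖ ^ 2 := by
      rw [norm_smul, Real.norm_eq_abs, mul_pow, sq_abs]
    rw [hin, hns]
  set a : ℝ := p - y with ha
  set b : ℝ := (p - y) * (1 - Real.exp (-(η * ‖q‖ ^ 2))) / (η * ‖q‖ ^ 2) with hb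
  rw [hg, hz, Hc a, Hc b, EReal.coe_le_coe_iff, hnorm a, hnorm b]
  have hu : 0 < η * ‖q‖ ^ 2 := mul_pos hη hQ
  have hstep := iwa_aux_real (η * ‖q‖ ^ 2) a hu
  have hbab : b = a * ((1 - Real.exp (-(η * ‖q‖ ^ 2))) / (η * ‖q‖ ^ 2)) := by
    rw [hb, ha]; ring
  have hform : ∀ c : ℝ,
      η / 2 * (‖η⁻¹ • x‖ ^ 2 - 2 * (c * (η⁻¹ * p)) + c ^ 2 * ‖q‖ ^ 2) + (c * y + c ^ 2 / 2)
        = η / 2 * ‖η⁻¹ • x‖ ^ 2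
          + (c ^ 2 * (η * ‖q‖ ^ 2 + 1) - 2 * c * (p - y)) / 2 := by
    intro c
    field_simp
    ring
  rw [hform a, hform b, hbab]
  rw [ha] at hstep ⊢
  nlinarith [hstep]
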